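/- Let γ ∈ [0,1) and let (c_t)_{t≥0} and (ρ_t)_{t≥0} be sequences of nonnegative reals. Set ρ_{-1} := 1, C_{-1} := C_{-2} := 1 and C_t := ∏_{u=0}^{t} c_u for t ≥ 0, and define α_0 := 1 − ρ_0 and α_t := ρ_{t-1} − c_{t-1}·ρ_t for t ≥ 1. If the series ∑_{t=0}^∞ γ^t C_{t-1} ρ_t converges, then the series ∑_{t=0}^∞ γ^t C_{t-2} α_t converges and ∑_{t=0}^∞ γ^t C_{t-2} α_t = 1 + (γ − 1)·∑_{t=0}^∞ γ^t C_{t-1} ρ_t. -/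
import Mathlib


/-- The coefficients `α_t`: `α_0 = 1 - ρ_0` and `α_t = ρ_{t-1} - c_{t-1} * ρ_t` for
`t ≥ 1`. -/
def vtraceAlpha (c ρ : ℕ → ℝ) : ℕ → ℝ
  | 0 => 1 - ρ 0
  | (t + 1) => ρ t - c t * ρ (t + 1)

/-- with `C_{t-1} = ∏_{u ∈ range t} c_u` and `C_{t-2} = ∏_{u ∈ range (t-1)} c_u`
(conventions `C_{-1} = C_{-2} = 1` handled by ℕ-subtraction), if
`∑ γ^t C_{t-1} ρ_t` converges then `∑ γ^t C_{t-2} α_t` converges and equals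
`1 + (γ - 1) * ∑ γ^t C_{t-1} ρ_t`. -/
theorem vtrace_alpha_series_identity
    (γ : ℝ) (hγ0 : 0 ≤ γ) (hγ1 : γ < 1)
    (c ρ : ℕ → ℝ) (hc : ∀ t, 0 ≤ c t) (hρ : ∀ t, 0 ≤ ρ t)
    (hsum : Summable fun t : ℕ => γ ^ t * (∏ u ∈ Finset.range t, c u) * ρ t) :
    (Summable fun t : ℕ =>
        γ ^ t * (∏ u ∈ Finset.range (t - 1), c u) * vtraceAlpha c ρ t) ∧
    ∑' t : ℕ, γ ^ t * (∏ u ∈ Finset.range (t - 1), c u) * vtraceAlpha c ρ t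
      = 1 + (γ - 1) * ∑' t : ℕ, γ ^ t * (∏ u ∈ Finset.range t, c u) * ρ t := by
  set a : ℕ → ℝ := fun t => γ ^ t * (∏ u ∈ Finset.range t, c u) * ρ t with ha
  set g : ℕ → ℝ := fun t => Nat.rec 1 (fun n _ => γ * a n) t with hg
  have hg0 : g 0 = 1 := rfl
  have hgs : ∀ n, g (n + 1) = γ * a n := fun n => rfl
  have hkey : ∀ t, γ ^ t * (∏ u ∈ Finset.range (t - 1), c u) * vtraceAlpha c ρ t
      = g t - a t := by
    intro t
    cases t with
    | zero => simp [vtraceAlpha, ha, hg0]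
    | succ n =>
      simp only [hgs, ha, vtraceAlpha, Nat.add_sub_cancel, Finset.prod_range_succ]
      ring
  have hgsum : Summable g := by
    rw [← summable_nat_add_iff 1]
    simpa only [hgs] using hsum.mul_left γ
  have hfsum : Summable fun t : ℕ =>
      γ ^ t * (∏ u ∈ Finset.range (t - 1), c u) * vtraceAlpha c ρ t := by
    simpa only [hkey] using hgsum.sub hsum
  refine ⟨hfsum, ?_⟩
  have htg : ∑' t, g t = 1 + γ * ∑' t, a t := by
    rw [Summable.tsum_eq_zero_add hgsum]
    simp only [hgs, hg0, tsum_mul_left]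
  calc ∑' t : ℕ, γ ^ t * (∏ u ∈ Finset.range (t - 1), c u) * vtraceAlpha c ρ t
      = ∑' t, (g t - a t) := by simp only [hkey]
    _ = (∑' t, g t) - ∑' t, a t := Summable.tsum_sub hgsum hsum
    _ = 1 + (γ - 1) * ∑' t, a t := by rw [htg]; ring
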